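/- In the setup of the previous statement, with additionally a B₀-module K and a B₀-module map u₀ : I⊗_{B₀}F₀ → K, form the pushout M := K ⊕_{I⊗E₀} L of L along the composite u₀ ∘ (I⊗f₀) : I⊗_{B₀}E₀ → K. Then M is annihilated by I, i.e. M is a B₀-module, and 0 → K → M → N₀ → 0 is a short exact sequence of B₀-modules. -/
import Mathlib


/-!
STATEMENT 1: with the setup of Statement 0 and additionally a `B₀`-module `K`
and a `B₀`-map `u₀ : I ⊗_{B₀} F₀ → K`, the pushout `M := K ⊕_{I⊗E₀} L` of
`L := ker (f₀ ∘ p)` along `g := u₀ ∘ (I ⊗ f₀)` is annihilated by `I` (hence a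
`B₀`-module) and `0 → K → M → N₀ → 0` is a short exact sequence.
The pushout is realized as `(K × L) ⧸ {(g x, -x) : x ∈ I ⊗ E₀}`.
-/

open TensorProduct

theorem stmt1 {B : Type*} [CommRing B] (I : Ideal B) (hI : I ^ 2 = ⊥)
    {E E₀ F₀ K : Type*} [AddCommGroup E] [AddCommGroup E₀] [AddCommGroup F₀]
    [AddCommGroup K] [Module B E] [Module B E₀] [Module B F₀] [Module B K]
    (hE₀ : ∀ i ∈ I, ∀ x : E₀, i • x = 0) (hF₀ : ∀ i ∈ I, ∀ x : F₀, i • x = 0)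
    (hK : ∀ i ∈ I, ∀ x : K, i • x = 0)
    (p : E →ₗ[B] E₀) (hp : Function.Surjective p)
    (μ : (↥I ⊗[B] E₀) →ₗ[B] E)
    (hμ : ∀ (i : ↥I) (e : E), μ (i ⊗ₜ[B] p e) = (i : B) • e)
    (hμinj : Function.Injective μ)
    (hex : Function.Exact μ p)
    (f₀ : E₀ →ₗ[B] F₀) (hf₀ : Function.Surjective f₀)
    (u₀ : (↥I ⊗[B] F₀) →ₗ[B] K)
    -- `L = ker (f₀ ∘ p)` with the corestriction of `μ` to `L`
    (ι : (↥I ⊗[B] E₀) →ₗ[B] ↥(LinearMap.ker (f₀ ∘ₗ p)))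
    (hι : ∀ t, (ι t : E) = μ t) :
    -- the pushout `M`
    letI g : (↥I ⊗[B] E₀) →ₗ[B] K := u₀ ∘ₗ LinearMap.lTensor ↥I f₀
    letI M := (K × ↥(LinearMap.ker (f₀ ∘ₗ p))) ⧸ LinearMap.range (g.prod (-ι))
    (∀ i ∈ I, ∀ m : M, i • m = 0) ∧
    ∃ (κ : K →ₗ[B] M) (π : M →ₗ[B] ↥(LinearMap.ker f₀)),
      (∀ k, κ k = Submodule.Quotient.mk (k, 0)) ∧
      (∀ x : ↥(LinearMap.ker (f₀ ∘ₗ p)),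
        (π (Submodule.Quotient.mk (0, x)) : E₀) = p (x : E)) ∧
      Function.Injective κ ∧ Function.Surjective π ∧ Function.Exact κ π := by
  set g : (↥I ⊗[B] E₀) →ₗ[B] K := u₀ ∘ₗ LinearMap.lTensor ↥I f₀ with hg
  have pμ : ∀ t, p (μ t) = 0 := fun t => (hex (μ t)).mpr ⟨t, rfl⟩
  have hmem : ∀ x : K × ↥(LinearMap.ker (f₀ ∘ₗ p)),
      p ((x.2 : E)) ∈ LinearMap.ker f₀ := by
    rintro ⟨k, x⟩
    have := x.2
    rw [LinearMap.mem_ker, LinearMap.comp_apply] at this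
    exact this
  have hxk : ∀ x : ↥(LinearMap.ker (f₀ ∘ₗ p)), f₀ (p (x : E)) = 0 := by
    intro x
    have := x.2
    rw [LinearMap.mem_ker, LinearMap.comp_apply] at this
    exact this
  set R := LinearMap.range (g.prod (-ι)) with hRdef
  let π₀ : (K × ↥(LinearMap.ker (f₀ ∘ₗ p))) →ₗ[B] ↥(LinearMap.ker f₀) :=
    LinearMap.codRestrict _
      (p ∘ₗ (LinearMap.ker (f₀ ∘ₗ p)).subtype ∘ₗ LinearMap.snd B K _) hmem
  have hπ₀ : ∀ x, (π₀ x : E₀) = p ((x.2 : E)) := fun x => rfl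
  have hRker : R ≤ LinearMap.ker π₀ := by
    rintro _ ⟨t, rfl⟩
    have h1 : (π₀ ((g.prod (-ι)) t) : E₀) = p (-(ι t : E)) := rfl
    have : (π₀ ((g.prod (-ι)) t) : E₀) = 0 := by
      rw [h1, hι, map_neg, pμ, neg_zero]
    exact Subtype.ext this
  refine ⟨?_, Submodule.mkQ R ∘ₗ LinearMap.inl B K _, Submodule.liftQ R π₀ hRker,
    fun k => rfl, fun x => rfl, ?_, ?_, ?_⟩
  · -- annihilation
    intro i hi m
    obtain ⟨⟨k, x⟩, rfl⟩ := Submodule.Quotient.mk_surjective R m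
    have h1 : i • (⟨k, x⟩ : K × ↥(LinearMap.ker (f₀ ∘ₗ p))) = (0, i • x) := by
      ext
      · exact hK i hi k
      · rfl
    have h2 : ((0 : K), i • x) ∈ R := by
      refine ⟨-((⟨i, hi⟩ : I) ⊗ₜ[B] p (x : E)), ?_⟩
      have hg0 : g ((⟨i, hi⟩ : I) ⊗ₜ[B] p (x : E)) = 0 := by
        show u₀ (LinearMap.lTensor ↥I f₀ _) = 0
        rw [LinearMap.lTensor_tmul, hxk, tmul_zero, map_zero]
      ext
      · show g _ = (0 : K)
        rw [map_neg, hg0, neg_zero]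
      · show ((-ι) (-((⟨i, hi⟩ : I) ⊗ₜ[B] p (x : E))) : E) = ((i • x : _) : E)
        rw [LinearMap.neg_apply, map_neg, neg_neg, hι, hμ]
        rfl
    rw [← Submodule.Quotient.mk_smul, h1]
    exact (Submodule.Quotient.mk_eq_zero R).mpr h2
  · -- κ injective
    intro a b hab
    have hmk : Submodule.Quotient.mk (p := R) ((a, 0) : K × _) =
        Submodule.Quotient.mk (b, 0) := hab
    rw [Submodule.Quotient.eq] at hmk
    obtain ⟨t, ht⟩ := hmk
    have ht2 : ι t = 0 := by
      have h2 := congrArg Prod.snd ht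
      simp only [LinearMap.prod_apply, Pi.prod, Prod.snd_sub, sub_zero,
        LinearMap.neg_apply, neg_eq_zero] at h2
      simpa using h2
    have hμt : μ t = 0 := by
      rw [← hι, ht2, Submodule.coe_zero]
    have ht0 : t = 0 := hμinj (by rw [hμt, map_zero])
    have h1 := congrArg Prod.fst ht
    simp only [LinearMap.prod_apply, Pi.prod, Prod.fst_sub, ht0, map_zero] at h1
    exact sub_eq_zero.mp h1.symm
  · -- π surjective
    intro y
    obtain ⟨e, he⟩ := hp (y : E₀)
    have heL : e ∈ LinearMap.ker (f₀ ∘ₗ p) := by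
      have := y.2
      simp only [LinearMap.mem_ker] at this ⊢
      simp [he, this]
    exact ⟨Submodule.Quotient.mk ((0 : K), ⟨e, heL⟩), Subtype.ext he⟩
  · -- exactness
    intro m
    constructor
    · intro hm
      obtain ⟨⟨k, x⟩, rfl⟩ := Submodule.Quotient.mk_surjective R m
      have hpx : p (x : E) = 0 := congrArg Subtype.val hm
      obtain ⟨t, ht⟩ := (hex (x : E)).mp hpx
      refine ⟨k + g t, ?_⟩
      show Submodule.Quotient.mk (k + g t, (0 : ↥(LinearMap.ker (f₀ ∘ₗ p)))) =
        Submodule.Quotient.mk (k, x)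
      rw [Submodule.Quotient.eq]
      refine ⟨t, ?_⟩
      ext
      · show g t = k + g t - k
        rw [add_sub_cancel_left]
      · show ((-ι) t : E) = ((((k + g t, (0:↥(LinearMap.ker (f₀ ∘ₗ p)))) - (k, x)).2 : _) : E)
        show -(ι t : E) = (((0 : ↥(LinearMap.ker (f₀ ∘ₗ p))) - x : _) : E)
        rw [hι, ht]
        simp
    · rintro ⟨k, rfl⟩
      exact Subtype.ext (map_zero p)
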